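/- For s ∈ ℂ with −1 < Re(s) ≤ 0, the limit lim_{k→∞} ( ∑_{j=1}^{k} j^{−s} − k^{1−s}/(1−s) − (1/2)k^{−s} ) exists and equals ζ(s). -/

import Mathlib

open Filter Complex

noncomputable def trap (j : ℕ) (s : ℂ) : ℂ :=
  ((j : ℂ) ^ (-s) + ((j : ℂ) + 1) ^ (-s)) / 2
    - (((j : ℂ) + 1) ^ (1 - s) - (j : ℂ) ^ (1 - s)) / (1 - s)


lemma telescope (s : ℂ) (m : ℕ) :
    (∑ j ∈ Finset.Icc 1 (m + 1), (j : ℂ) ^ (-s)) - ((m + 1 : ℕ) : ℂ) ^ (1 - s) / (1 - s)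
      - (1 / 2) * ((m + 1 : ℕ) : ℂ) ^ (-s)
    = (∑ j ∈ Finset.range m, trap (j + 1) s) + 1 / 2 - 1 / (1 - s) := by
  induction m with
  | zero =>
    norm_num
    ring
  | succ m ih =>
    rw [Finset.sum_Icc_succ_top (by omega), Finset.sum_range_succ]
    have h2 : ((m + 1 + 1 : ℕ) : ℂ) = ((m + 1 : ℕ) : ℂ) + 1 := by push_cast; ring
    rw [h2]
    simp only [trap] at ih ⊢
    linear_combination ih

lemma trap_bound (s : ℂ) (hs : s ≠ 1) (hre : -1 < s.re) (j : ℕ) (hj : 1 ≤ j) :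
    ‖trap j s‖ ≤ ‖s‖ * ‖s + 1‖ * (j : ℝ) ^ (-s.re - 2) := by
  have hx0 : 1 ≤ (j : ℝ) := by exact_mod_cast hj
  set x0 : ℝ := (j : ℝ) with hx0def
  have hpos : ∀ t : ℝ, 0 ≤ t → 0 < x0 + t := fun t ht => by linarith
  have h1s : (1 : ℂ) - s ≠ 0 := fun h => hs (by linear_combination -h)
  have hd : ∀ (w : ℂ) (t : ℝ), 0 ≤ t →
      HasDerivAt (fun t : ℝ => ((x0 : ℂ) + (t : ℂ)) ^ w)
        (w * ((x0 : ℂ) + (t : ℂ)) ^ (w - 1)) t := by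
    intro w t ht
    have hsl : ((x0 : ℂ) + (t : ℂ)) ∈ Complex.slitPlane := by
      rw [Complex.mem_slitPlane_iff]
      left
      simp only [Complex.add_re, Complex.ofReal_re]
      exact hpos t ht
    have hc : HasDerivAt (fun z : ℂ => ((x0 : ℂ) + z) ^ w)
        (w * ((x0 : ℂ) + (t : ℂ)) ^ (w - 1) * 1) (t : ℂ) := by
      have hb : HasDerivAt (fun z : ℂ => (x0 : ℂ) + z) 1 (t : ℂ) :=
        (hasDerivAt_id _).const_add _
      exact hb.cpow_const hsl
    simpa using hc.comp_ofReal
  have hIcc : Set.uIcc (0:ℝ) 1 = Set.Icc 0 1 := Set.uIcc_of_le (by norm_num)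
  have hcont : ∀ w : ℂ, ContinuousOn (fun t : ℝ => ((x0 : ℂ) + (t : ℂ)) ^ w)
      (Set.uIcc (0:ℝ) 1) := by
    intro w t ht
    rw [hIcc] at ht
    exact ((hd w t ht.1).continuousAt).continuousWithinAt
  -- FTC
  have hint : ∫ t in (0:ℝ)..1, ((x0 : ℂ) + (t : ℂ)) ^ (-s)
      = (((x0 : ℂ) + 1) ^ (1 - s) - (x0 : ℂ) ^ (1 - s)) / (1 - s) := by
    have key : ∀ t ∈ Set.uIcc (0:ℝ) 1,
        HasDerivAt (fun t : ℝ => ((x0 : ℂ) + (t : ℂ)) ^ (1 - s) / (1 - s))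
          (((x0 : ℂ) + (t : ℂ)) ^ (-s)) t := by
      intro t ht
      rw [hIcc] at ht
      have := (hd (1 - s) t ht.1).div_const (1 - s)
      have he : (1 : ℂ) - s - 1 = -s := by ring
      rw [he] at this
      simpa [mul_div_assoc, mul_div_cancel_left₀ _ h1s] using this
    have := intervalIntegral.integral_eq_sub_of_hasDerivAt key
      ((hcont (-s)).intervalIntegrable)
    rw [this]
    push_cast
    ring_nf
  -- integration by parts
  have hibp : ∫ t in (0:ℝ)..1, ((t : ℂ) - 1/2) * (-s * ((x0 : ℂ) + (t : ℂ)) ^ (-s - 1))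
      = trap j s := by
    have hu : ∀ t ∈ Set.uIcc (0:ℝ) 1,
        HasDerivAt (fun t : ℝ => (t : ℂ) - 1/2) 1 t := by
      intro t _
      simpa using (Complex.ofRealCLM.hasDerivAt (x := t)).sub_const (1/2 : ℂ)
    have hv : ∀ t ∈ Set.uIcc (0:ℝ) 1,
        HasDerivAt (fun t : ℝ => ((x0 : ℂ) + (t : ℂ)) ^ (-s))
          (-s * ((x0 : ℂ) + (t : ℂ)) ^ (-s - 1)) t := by
      intro t ht
      rw [hIcc] at ht
      simpa using hd (-s) t ht.1
    have hu' : IntervalIntegrable (fun _ : ℝ => (1 : ℂ)) MeasureTheory.volume 0 1 :=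
      intervalIntegrable_const
    have hv' : IntervalIntegrable (fun t : ℝ => -s * ((x0 : ℂ) + (t : ℂ)) ^ (-s - 1))
        MeasureTheory.volume 0 1 :=
      (((hcont (-s - 1)).const_smul (-s)).intervalIntegrable)
    rw [intervalIntegral.integral_mul_deriv_eq_deriv_mul hu hv hu' hv']
    simp only [one_mul]
    rw [hint]
    simp only [trap, hx0def]
    push_cast
    ring_nf
  -- the centering integral vanishes
  have hzero : ∫ t in (0:ℝ)..1, ((t : ℂ) - 1/2) = 0 := by
    have h1 : ∫ t in (0:ℝ)..1, (t : ℂ) = 1/2 := by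
      have hder : ∀ t ∈ Set.uIcc (0:ℝ) 1,
          HasDerivAt (fun t : ℝ => ((t : ℂ) ^ 2 / 2)) (t : ℂ) t := by
        intro t _
        have hz : HasDerivAt (fun z : ℂ => z ^ 2 / 2) (t : ℂ) (t : ℂ) := by
          have := (hasDerivAt_pow 2 ((t : ℂ))).div_const 2
          refine this.congr_deriv ?_
          push_cast
          ring
        exact hz.comp_ofReal
      rw [intervalIntegral.integral_eq_sub_of_hasDerivAt hder
        (ContinuousOn.intervalIntegrable Complex.continuous_ofReal.continuousOn)]
      norm_num
    rw [intervalIntegral.integral_sub (by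
        apply ContinuousOn.intervalIntegrable
        exact Complex.continuous_ofReal.continuousOn) intervalIntegrable_const,
      h1, intervalIntegral.integral_const]
    norm_num
  set c : ℂ := -s * ((x0 : ℂ) + ((1/2 : ℝ) : ℂ)) ^ (-s - 1) with hc
  have hrepr : trap j s = ∫ t in (0:ℝ)..1,
      ((t : ℂ) - 1/2) * (-s * ((x0 : ℂ) + (t : ℂ)) ^ (-s - 1) - c) := by
    rw [show (fun t : ℝ => ((t : ℂ) - 1/2) * (-s * ((x0 : ℂ) + (t : ℂ)) ^ (-s - 1) - c))
        = (fun t : ℝ => ((t : ℂ) - 1/2) * (-s * ((x0 : ℂ) + (t : ℂ)) ^ (-s - 1))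
            - ((t : ℂ) - 1/2) * c) from funext fun t => by ring]
    rw [intervalIntegral.integral_sub, hibp, intervalIntegral.integral_mul_const, hzero]
    · ring
    · apply ContinuousOn.intervalIntegrable
      exact ((Complex.continuous_ofReal.continuousOn.sub continuousOn_const).mul
        (((hcont (-s - 1)).const_smul (-s))))
    · apply ContinuousOn.intervalIntegrable
      exact (Complex.continuous_ofReal.continuousOn.sub continuousOn_const).mul continuousOn_const
  -- bound the derivative of the integrand's second factor
  set M : ℝ := ‖s‖ * ‖s + 1‖ * x0 ^ (-s.re - 2) with hM
  have hM0 : 0 ≤ M := by positivity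
  have hnorm : ∀ t : ℝ, 0 ≤ t →
      ‖-s * ((-s - 1) * ((x0 : ℂ) + (t : ℂ)) ^ (-s - 1 - 1))‖ ≤ M := by
    intro t ht
    rw [norm_mul, norm_mul, norm_neg]
    have h1 : ‖-s - 1‖ = ‖s + 1‖ := by rw [show -s - 1 = -(s+1) by ring, norm_neg]
    rw [h1]
    have h2 : ‖((x0 : ℂ) + (t : ℂ)) ^ (-s - 1 - 1)‖ = (x0 + t) ^ (-s.re - 2) := by
      rw [show ((x0 : ℂ) + (t : ℂ)) = (((x0 + t : ℝ)) : ℂ) by push_cast; ring]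
      rw [Complex.norm_cpow_eq_rpow_re_of_pos (hpos t ht)]
      congr 1
      simp
      ring
    rw [h2]
    have hle : (x0 + t) ^ (-s.re - 2) ≤ x0 ^ (-s.re - 2) :=
      Real.rpow_le_rpow_of_nonpos (by linarith) (by linarith) (by linarith)
    calc ‖s‖ * (‖s + 1‖ * (x0 + t) ^ (-s.re - 2))
        = ‖s‖ * ‖s + 1‖ * (x0 + t) ^ (-s.re - 2) := by ring
      _ ≤ ‖s‖ * ‖s + 1‖ * x0 ^ (-s.re - 2) := by gcongr
      _ = M := by rw [hM]
  have hlip : ∀ t ∈ Set.Icc (0:ℝ) 1,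
      ‖-s * ((x0 : ℂ) + (t : ℂ)) ^ (-s - 1) - c‖ ≤ M * |t - 1/2| := by
    intro t ht
    have := (convex_Icc (0:ℝ) 1).norm_image_sub_le_of_norm_hasDerivWithin_le
      (f := fun t : ℝ => -s * ((x0 : ℂ) + (t : ℂ)) ^ (-s - 1))
      (f' := fun t : ℝ => -s * ((-s - 1) * ((x0 : ℂ) + (t : ℂ)) ^ (-s - 1 - 1)))
      (C := M) (x := (1/2 : ℝ)) (y := t)
      (fun u hu => (((hd (-s - 1) u hu.1).const_mul (-s)).hasDerivWithinAt))
      (fun u hu => hnorm u hu.1)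
      (Set.mem_Icc.mpr ⟨by norm_num, by norm_num⟩) ht
    rw [hc]
    simpa [Real.norm_eq_abs] using this
  have hfinal : ‖trap j s‖ ≤ M := by
    rw [hrepr]
    have := intervalIntegral.norm_integral_le_of_norm_le_const
      (C := M) (f := fun t : ℝ => ((t : ℂ) - 1/2) * (-s * ((x0 : ℂ) + (t : ℂ)) ^ (-s - 1) - c))
      (a := (0:ℝ)) (b := 1) ?_
    · simpa using this
    · intro t ht
      rw [Set.uIoc_of_le (by norm_num : (0:ℝ) ≤ 1)] at ht
      have ht' : t ∈ Set.Icc (0:ℝ) 1 := ⟨le_of_lt ht.1, ht.2⟩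
      rw [norm_mul]
      have h1 : ‖(t : ℂ) - 1/2‖ = |t - 1/2| := by
        rw [show (t : ℂ) - 1/2 = ((t - 1/2 : ℝ) : ℂ) by push_cast; ring,
          Complex.norm_real, Real.norm_eq_abs]
      have h2 : |t - 1/2| ≤ 1/2 := by
        rw [abs_le]; constructor <;> [linarith [ht'.1]; linarith [ht'.2]]
      calc ‖(t : ℂ) - 1/2‖ * ‖-s * ((x0 : ℂ) + (t : ℂ)) ^ (-s - 1) - c‖
          ≤ |t - 1/2| * (M * |t - 1/2|) := by
            rw [h1]; gcongr; exact hlip t ht'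
        _ ≤ (1/2) * (M * (1/2)) := by
            have hMt : M * |t - 1/2| ≤ M * (1/2) := mul_le_mul_of_nonneg_left h2 hM0
            apply mul_le_mul h2 hMt (by positivity) (by norm_num)
        _ ≤ M := by linarith
  exact hfinal

noncomputable def zetaStrip (s : ℂ) : ℂ := (∑' j : ℕ, trap (j + 1) s) + 1 / 2 - 1 / (1 - s)

lemma summable_trap {s : ℂ} (hs : s ≠ 1) (hre : -1 < s.re) :
    Summable (fun j : ℕ => trap (j + 1) s) := by
  apply Summable.of_norm_bounded
    (g := fun j : ℕ => ‖s‖ * ‖s + 1‖ * (((j + 1 : ℕ) : ℝ) ^ (-s.re - 2)))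
  · apply Summable.mul_left
    exact (Real.summable_nat_rpow.mpr (by linarith)).comp_injective (add_left_injective 1)
  · intro j
    exact trap_bound s hs hre (j + 1) (by omega)

lemma tendsto_partial (s : ℂ) (hs : s ≠ 1) (hre : -1 < s.re) :
    Tendsto (fun k : ℕ =>
        (∑ j ∈ Finset.Icc 1 k, (j : ℂ) ^ (-s)) - (k : ℂ) ^ (1 - s) / (1 - s)
          - (1 / 2) * (k : ℂ) ^ (-s)) atTop (nhds (zetaStrip s)) := by
  have hsum := summable_trap hs hre
  have h1 : Tendsto (fun m : ℕ =>
      (∑ j ∈ Finset.range m, trap (j + 1) s) + 1 / 2 - 1 / (1 - s))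
      atTop (nhds (zetaStrip s)) := by
    unfold zetaStrip
    exact ((hsum.hasSum.tendsto_sum_nat).add_const _).sub_const _
  have h3 := h1.comp (tendsto_sub_atTop_nat 1)
  apply h3.congr'
  filter_upwards [eventually_ge_atTop 1] with k hk
  obtain ⟨m, rfl⟩ := Nat.exists_eq_add_of_le hk
  have hmm : 1 + m - 1 = m := by omega
  simp only [Function.comp_apply, hmm]
  rw [add_comm 1 m]
  exact (telescope s m).symm

lemma tendsto_nat_cpow_zero {w : ℂ} (hw : w.re < 0) :
    Tendsto (fun k : ℕ => (k : ℂ) ^ w) atTop (nhds 0) := by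
  apply squeeze_zero_norm' (a := fun k : ℕ => (k : ℝ) ^ w.re)
  · filter_upwards [eventually_gt_atTop 0] with k hk
    exact le_of_eq (Complex.norm_natCast_cpow_of_pos hk w)
  · have h := tendsto_rpow_neg_atTop (y := -w.re) (by linarith)
    simp only [neg_neg] at h
    exact h.comp tendsto_natCast_atTop_atTop

lemma zetaStrip_eq_of_one_lt (s : ℂ) (hs : 1 < s.re) : riemannZeta s = zetaStrip s := by
  have hs1 : s ≠ 1 := by
    intro h; rw [h] at hs; norm_num at hs
  have hs0 : -s ≠ 0 := by
    intro h
    have hzz : s = 0 := by linear_combination -h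
    rw [hzz] at hs; norm_num at hs
  have hre : -1 < s.re := by linarith
  have hA := tendsto_partial s hs1 hre
  have hsum : Summable (fun n : ℕ => (n : ℂ) ^ (-s)) := by
    have := Complex.summable_one_div_nat_cpow.mpr hs
    simpa [Complex.cpow_neg, one_div] using this
  have hzeta : riemannZeta s = ∑' n : ℕ, (n : ℂ) ^ (-s) := by
    rw [zeta_eq_tsum_one_div_nat_cpow hs]
    apply tsum_congr
    intro n
    rw [Complex.cpow_neg, one_div]
  have hps : Tendsto (fun k : ℕ => ∑ j ∈ Finset.Icc 1 k, (j : ℂ) ^ (-s)) atTop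
      (nhds (riemannZeta s)) := by
    have h0 : ∀ k : ℕ, ∑ j ∈ Finset.Icc 1 k, (j : ℂ) ^ (-s)
        = ∑ j ∈ Finset.range (k + 1), (j : ℂ) ^ (-s) := by
      intro k
      symm
      apply (Finset.sum_subset ?_ ?_).symm
      · intro x hx
        simp only [Finset.mem_Icc, Finset.mem_range] at hx ⊢
        omega
      · intro x hx hnx
        simp only [Finset.mem_Icc, Finset.mem_range] at hx hnx
        have hx0 : x = 0 := by omega
        subst hx0
        rw [Nat.cast_zero, Complex.zero_cpow hs0]
    simp only [h0]
    rw [hzeta]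
    exact (hsum.hasSum.tendsto_sum_nat).comp (tendsto_add_atTop_nat 1)
  have hB1 : Tendsto (fun k : ℕ => (k : ℂ) ^ (1 - s) / (1 - s)) atTop (nhds 0) := by
    have := (tendsto_nat_cpow_zero (w := 1 - s) (by simp [Complex.sub_re]; linarith)).div_const
      (1 - s)
    simpa using this
  have hB2 : Tendsto (fun k : ℕ => (1 / 2 : ℂ) * (k : ℂ) ^ (-s)) atTop (nhds 0) := by
    have := (tendsto_nat_cpow_zero (w := -s) (by simp [Complex.neg_re]; linarith)).const_mul
      (1 / 2 : ℂ)
    simpa using this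
  have hB := (hps.sub hB1).sub hB2
  simp only [sub_zero] at hB
  exact tendsto_nhds_unique hB hA

lemma zetaStrip_differentiableAt {z₀ : ℂ} (h : -1 < z₀.re) (h1 : z₀ ≠ 1) :
    DifferentiableAt ℂ zetaStrip z₀ := by
  set a : ℝ := (z₀.re - 1) / 2 with ha_def
  have ha : -1 < a := by rw [ha_def]; linarith
  have haz : a < z₀.re := by rw [ha_def]; linarith
  set R : ℝ := ‖z₀‖ + 1 with hR_def
  have hR0 : 0 < R := by positivity
  set W : Set ℂ := {z | a < z.re} ∩ (Metric.ball 0 R ∩ {z | z ≠ 1}) with hW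
  have hWopen : IsOpen W :=
    (isOpen_lt continuous_const Complex.continuous_re).inter
      (Metric.isOpen_ball.inter isOpen_ne)
  have hz₀W : z₀ ∈ W := by
    refine ⟨haz, ?_, h1⟩
    rw [Metric.mem_ball, dist_zero_right, hR_def]
    linarith
  have hWsub : ∀ z ∈ W, a < z.re ∧ ‖z‖ < R ∧ z ≠ 1 := by
    intro z hz
    obtain ⟨h1', h2', h3'⟩ := hz
    exact ⟨h1', by rwa [Metric.mem_ball, dist_zero_right] at h2', h3'⟩
  have htdiff : ∀ j : ℕ, DifferentiableOn ℂ (fun z => trap (j + 1) z) W := by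
    intro j
    have hc0 : ((j + 1 : ℕ) : ℂ) ≠ 0 := Nat.cast_ne_zero.mpr (by omega)
    have hc1 : ((j + 1 : ℕ) : ℂ) + 1 ≠ 0 := by
      have : ((j + 1 : ℕ) : ℂ) + 1 = ((j + 2 : ℕ) : ℂ) := by push_cast; ring
      rw [this]
      exact Nat.cast_ne_zero.mpr (by omega)
    unfold trap
    apply DifferentiableOn.sub
    · apply DifferentiableOn.div_const
      apply DifferentiableOn.add
      · exact (differentiable_id.neg.const_cpow (Or.inl hc0)).differentiableOn
      · exact (differentiable_id.neg.const_cpow (Or.inl hc1)).differentiableOn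
    · apply DifferentiableOn.div
      · apply DifferentiableOn.sub
        · exact (((differentiable_const _).sub differentiable_id).const_cpow
            (Or.inl hc1)).differentiableOn
        · exact (((differentiable_const _).sub differentiable_id).const_cpow
            (Or.inl hc0)).differentiableOn
      · exact ((differentiable_const _).sub differentiable_id).differentiableOn
      · intro z hz
        exact sub_ne_zero.mpr (Ne.symm (hWsub z hz).2.2)
  have hdiff : DifferentiableOn ℂ (fun z => ∑' j : ℕ, trap (j + 1) z) W := by
    apply TendstoLocallyUniformlyOn.differentiableOn (φ := (atTop : Filter (Finset ℕ)))
      (F := fun T : Finset ℕ => fun z => ∑ j ∈ T, trap (j + 1) z)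
    · apply TendstoUniformlyOn.tendstoLocallyUniformlyOn
      apply tendstoUniformlyOn_tsum
        (u := fun j : ℕ => (R * (R + 1)) * (((j + 1 : ℕ) : ℝ) ^ (-a - 2)))
      · apply Summable.mul_left
        exact (Real.summable_nat_rpow.mpr (by linarith)).comp_injective (add_left_injective 1)
      · intro j z hz
        obtain ⟨hz1, hz2, hz3⟩ := hWsub z hz
        have hbase : (1 : ℝ) ≤ ((j + 1 : ℕ) : ℝ) := by
          have : (1 : ℕ) ≤ j + 1 := by omega
          exact_mod_cast this
        calc ‖trap (j + 1) z‖ ≤ ‖z‖ * ‖z + 1‖ * (((j + 1 : ℕ) : ℝ) ^ (-z.re - 2)) :=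
              trap_bound z hz3 (by linarith) (j + 1) (by omega)
          _ ≤ R * (R + 1) * (((j + 1 : ℕ) : ℝ) ^ (-a - 2)) := by
              have hz4 : ‖z + 1‖ ≤ R + 1 := by
                calc ‖z + 1‖ ≤ ‖z‖ + ‖(1 : ℂ)‖ := norm_add_le _ _
                  _ ≤ R + 1 := by rw [norm_one]; linarith
              have hexp : (((j + 1 : ℕ) : ℝ) ^ (-z.re - 2)) ≤ (((j + 1 : ℕ) : ℝ) ^ (-a - 2)) :=
                Real.rpow_le_rpow_of_exponent_le hbase (by linarith)
              have h5 : (0:ℝ) ≤ ‖z + 1‖ := norm_nonneg _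
              apply mul_le_mul
              · apply mul_le_mul (le_of_lt hz2) hz4 h5 (le_of_lt hR0)
              · exact hexp
              · positivity
              · positivity
    · filter_upwards with T
      exact DifferentiableOn.fun_sum fun j _ => htdiff j
    · exact hWopen
  have hfull : DifferentiableOn ℂ zetaStrip W := by
    unfold zetaStrip
    apply DifferentiableOn.sub
    · exact hdiff.add_const _
    · apply DifferentiableOn.div (differentiableOn_const _)
      · exact ((differentiable_const _).sub differentiable_id).differentiableOn
      · intro z hz
        exact sub_ne_zero.mpr (Ne.symm (hWsub z hz).2.2)
  exact hfull.differentiableAt (hWopen.mem_nhds hz₀W)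

lemma U_preconnected : IsPreconnected {z : ℂ | -1 < z.re ∧ z ≠ 1} := by
  set P1 : Set ℂ := {z | -1 < z.re} ∩ {z | 0 < z.im} with hP1
  set P2 : Set ℂ := {z | -1 < z.re} ∩ {z | z.im < 0} with hP2
  set P3 : Set ℂ := {z | -1 < z.re} ∩ {z | z.re < 1} with hP3
  set P4 : Set ℂ := {z | 1 < z.re} with hP4
  have hp1 : IsPreconnected P1 :=
    ((convex_halfSpace_re_gt _).inter (convex_halfSpace_im_gt _)).isPreconnected
  have hp2 : IsPreconnected P2 :=
    ((convex_halfSpace_re_gt _).inter (convex_halfSpace_im_lt _)).isPreconnected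
  have hp3 : IsPreconnected P3 :=
    ((convex_halfSpace_re_gt _).inter (convex_halfSpace_re_lt _)).isPreconnected
  have hp4 : IsPreconnected P4 := (convex_halfSpace_re_gt _).isPreconnected
  have hI : Complex.I ∈ P3 ∩ P1 := by
    constructor <;> constructor <;> simp [Complex.I_re, Complex.I_im]
  have h31 : IsPreconnected (P3 ∪ P1) :=
    IsPreconnected.union Complex.I hI.1 hI.2 hp3 hp1
  have hmI : -Complex.I ∈ (P3 ∪ P1) ∩ P2 := by
    constructor
    · left
      constructor <;> simp [Complex.neg_re, Complex.I_re]
    · constructor <;> simp [Complex.neg_re, Complex.neg_im, Complex.I_re, Complex.I_im]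
  have h312 : IsPreconnected ((P3 ∪ P1) ∪ P2) :=
    IsPreconnected.union (-Complex.I) hmI.1 hmI.2 h31 hp2
  have h2I : (2 : ℂ) + Complex.I ∈ ((P3 ∪ P1) ∪ P2) ∩ P4 := by
    constructor
    · left; right
      constructor
      · show -1 < ((2 : ℂ) + Complex.I).re
        simp [Complex.add_re, Complex.I_re]
        try norm_num
      · show 0 < ((2 : ℂ) + Complex.I).im
        simp [Complex.add_im, Complex.I_im]
    · show 1 < ((2 : ℂ) + Complex.I).re
      simp [Complex.add_re, Complex.I_re]
      try norm_num
  have hfin : IsPreconnected (((P3 ∪ P1) ∪ P2) ∪ P4) :=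
    IsPreconnected.union ((2 : ℂ) + Complex.I) h2I.1 h2I.2 h312 hp4
  have hEq : {z : ℂ | -1 < z.re ∧ z ≠ 1} = ((P3 ∪ P1) ∪ P2) ∪ P4 := by
    ext z
    simp only [Set.mem_setOf_eq, Set.mem_union, Set.mem_inter_iff, hP1, hP2, hP3, hP4]
    constructor
    · rintro ⟨hre, hne⟩
      rcases lt_trichotomy z.re 1 with h | h | h
      · exact Or.inl (Or.inl (Or.inl ⟨hre, h⟩))
      · rcases lt_trichotomy z.im 0 with h' | h' | h'
        · exact Or.inl (Or.inr ⟨hre, h'⟩)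
        · exfalso
          apply hne
          apply Complex.ext <;> simp [h, h']
        · exact Or.inl (Or.inl (Or.inr ⟨hre, h'⟩))
      · exact Or.inr h
    · rintro ((( ⟨h1', h2'⟩ | ⟨h1', h2'⟩) | ⟨h1', h2'⟩) | h')
      · refine ⟨h1', fun hz => ?_⟩
        rw [hz] at h2'
        simp at h2'
      · refine ⟨h1', fun hz => ?_⟩
        rw [hz] at h2'
        simp at h2'
      · refine ⟨h1', fun hz => ?_⟩
        rw [hz] at h2'
        simp at h2'
      · refine ⟨by linarith, fun hz => ?_⟩
        rw [hz] at h'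
        simp at h'
  rw [hEq]
  exact hfin

/-- For `-1 < Re s ≤ 0`, the limit of
`∑_{j=1}^k j^{-s} - k^{1-s}/(1-s) - (1/2)k^{-s}` as `k → ∞` exists and equals `ζ(s)`. -/
theorem zeta_eq_lim_partial_sums_strip_neg_one_zero (s : ℂ)
    (h0 : -1 < s.re) (h1 : s.re ≤ 0) :
    Tendsto (fun k : ℕ =>
        (∑ j ∈ Finset.Icc 1 k, (j : ℂ) ^ (-s)) - (k : ℂ) ^ (1 - s) / (1 - s)
          - (1 / 2) * (k : ℂ) ^ (-s))
      atTop (nhds (riemannZeta s)) := by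
  have hs1 : s ≠ 1 := by
    intro h
    rw [h] at h1
    norm_num at h1
  set U : Set ℂ := {z : ℂ | -1 < z.re ∧ z ≠ 1} with hU
  have hUopen : IsOpen U := by
    rw [hU]
    have : {z : ℂ | -1 < z.re ∧ z ≠ 1} = {z : ℂ | -1 < z.re} ∩ {z | z ≠ 1} := rfl
    rw [this]
    exact (isOpen_lt continuous_const Complex.continuous_re).inter isOpen_ne
  have hζa : AnalyticOnNhd ℂ riemannZeta U :=
    DifferentiableOn.analyticOnNhd
      (fun z hz => (differentiableAt_riemannZeta hz.2).differentiableWithinAt) hUopen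
  have hFa : AnalyticOnNhd ℂ zetaStrip U :=
    DifferentiableOn.analyticOnNhd
      (fun z hz => (zetaStrip_differentiableAt hz.1 hz.2).differentiableWithinAt) hUopen
  have h2U : (2 : ℂ) ∈ U := by
    constructor
    · norm_num
    · intro h
      have := congrArg Complex.re h
      norm_num at this
  have hev : riemannZeta =ᶠ[nhds (2 : ℂ)] zetaStrip := by
    have hopen : IsOpen {z : ℂ | 1 < z.re} := isOpen_lt continuous_const Complex.continuous_re
    have h2m : (2 : ℂ) ∈ {z : ℂ | 1 < z.re} := by norm_num
    filter_upwards [hopen.mem_nhds h2m] with z hz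
    exact zetaStrip_eq_of_one_lt z hz
  have hEqOn := hζa.eqOn_of_preconnected_of_eventuallyEq hFa U_preconnected h2U hev
  have hEq : riemannZeta s = zetaStrip s := hEqOn ⟨h0, hs1⟩
  rw [hEq]
  exact tendsto_partial s hs1 h0
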